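/- Let S' = Σ3(T/I)(0,4,7) be the set of all 144 reorderings of all transposed and inverted forms of (0,4,7) in (ℤ/12ℤ)³, and define RICH : S' → S' by RICH(y1,y2,y3) = (y2, y3, y2 + y3 − y1) (that is, RICH = (1 3) ∘ J^{2,3} where J^{2,3}(Y) = I_{y2+y3}(Y)). Then RICH maps S' to S', the power RICH⁶ has a fixed point in S' but RICH⁶ is not the identity on S', and the power RICH⁸ has a fixed point in S' but RICH⁸ is not the identity on S'. Consequently, no subgroup of Sym(S') containing RICH acts simply transitively on S'. -/
import Mathlib


/-- The coordinate-permuting action of `Σ3` on triples in `ℤ/12ℤ`. -/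
def pact (σ : Equiv.Perm (Fin 3)) (y : Fin 3 → ZMod 12) : Fin 3 → ZMod 12 :=
  fun i => y (σ⁻¹ i)

/-- The set of the 24 consonant-triad pitch-class segments in root-position ordering:
all componentwise transpositions `T_j(0,4,7)` and inversions `I_j(0,4,7)`. -/
def consSet : Set (Fin 3 → ZMod 12) :=
  {Y | (∃ j : ZMod 12, Y = fun i => ![0, 4, 7] i + j) ∨
       (∃ j : ZMod 12, Y = fun i => -(![0, 4, 7] i) + j)}

/-- The set `S' = Σ3(T/I)(0,4,7)` of all 144 reorderings of all transposed and inverted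
forms of `(0,4,7)`. -/
def orderedTriads : Set (Fin 3 → ZMod 12) :=
  {Y | ∃ σ : Equiv.Perm (Fin 3), ∃ Z ∈ consSet, pact σ Z = Y}

/-- The retrograde-inversion-enchaining map
`RICH(y1, y2, y3) = (y2, y3, y2 + y3 - y1)`, i.e. `RICH = (1 3) ∘ J^{2,3}`. -/
def rich (y : Fin 3 → ZMod 12) : Fin 3 → ZMod 12 :=
  ![y 1, y 2, y 1 + y 2 - y 0]

def inOT (Y : Fin 3 → ZMod 12) : Prop :=
  ∃ σ : Equiv.Perm (Fin 3),
    (∃ j : ZMod 12, pact σ (fun i => ![0, 4, 7] i + j) = Y) ∨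
    (∃ j : ZMod 12, pact σ (fun i => -(![0, 4, 7] i) + j) = Y)

instance : DecidablePred inOT := fun Y => by unfold inOT; infer_instance

lemma mem_iff' (Y : Fin 3 → ZMod 12) : Y ∈ orderedTriads ↔ inOT Y := by
  constructor
  · rintro ⟨σ, Z, (⟨j, rfl⟩ | ⟨j, rfl⟩), h⟩
    · exact ⟨σ, Or.inl ⟨j, h⟩⟩
    · exact ⟨σ, Or.inr ⟨j, h⟩⟩
  · rintro ⟨σ, (⟨j, h⟩ | ⟨j, h⟩)⟩
    · exact ⟨σ, _, Or.inl ⟨j, rfl⟩, h⟩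
    · exact ⟨σ, _, Or.inr ⟨j, rfl⟩, h⟩

set_option maxRecDepth 10000 in
lemma closure' : ∀ (σ : Equiv.Perm (Fin 3)) (j : ZMod 12),
    inOT (rich (pact σ (fun i => ![0, 4, 7] i + j))) ∧
    inOT (rich (pact σ (fun i => -(![0, 4, 7] i) + j))) := by decide

lemma pow_coe (RICH : Equiv.Perm ↥orderedTriads)
    (h : ∀ Y : ↥orderedTriads, (RICH Y : Fin 3 → ZMod 12) = rich (Y : Fin 3 → ZMod 12)) :
    ∀ (n : ℕ) (Y : ↥orderedTriads),
      ((RICH ^ n) Y : Fin 3 → ZMod 12) = rich^[n] (Y : Fin 3 → ZMod 12) := by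
  intro n
  induction n with
  | zero => intro Y; simp
  | succ n ih =>
      intro Y
      rw [pow_succ', Equiv.Perm.mul_apply, h, ih]
      exact (Function.iterate_succ_apply' rich n _).symm

/-- `RICH` maps `S' = Σ3(T/I)(0,4,7)` to itself; `RICH⁶` has a fixed point
in `S'` but is not the identity on `S'`; `RICH⁸` has a fixed point in `S'` but is not the
identity on `S'`; consequently no subgroup of `Sym(S')` containing `RICH` acts simply
transitively on `S'`. -/
theorem stmt19 :
    (∀ Y ∈ orderedTriads, rich Y ∈ orderedTriads) ∧
    (∀ RICH : Equiv.Perm ↥orderedTriads,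
      (∀ Y : ↥orderedTriads, (RICH Y : Fin 3 → ZMod 12) = rich (Y : Fin 3 → ZMod 12)) →
        ((∃ Y : ↥orderedTriads, (RICH ^ 6) Y = Y) ∧ RICH ^ 6 ≠ 1 ∧
         (∃ Y : ↥orderedTriads, (RICH ^ 8) Y = Y) ∧ RICH ^ 8 ≠ 1 ∧
         (∀ H : Subgroup (Equiv.Perm ↥orderedTriads), RICH ∈ H →
            ¬ (∀ Y Z : ↥orderedTriads, ∃! p : Equiv.Perm ↥orderedTriads,
                  p ∈ H ∧ p Y = Z)))) := by
  constructor
  · intro Y hY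
    rw [mem_iff'] at hY ⊢
    obtain ⟨σ, (⟨j, h⟩ | ⟨j, h⟩)⟩ := hY
    · rw [← h]; exact (closure' σ j).1
    · rw [← h]; exact (closure' σ j).2
  · intro RICH h
    let Y6 : ↥orderedTriads := ⟨![0, 7, 4], (mem_iff' _).mpr (by decide)⟩
    let Y8 : ↥orderedTriads := ⟨![6, 11, 3], (mem_iff' _).mpr (by decide)⟩
    let Yb : ↥orderedTriads := ⟨![0, 4, 7], (mem_iff' _).mpr (by decide)⟩
    have hfix6 : (RICH ^ 6) Y6 = Y6 := by
      apply Subtype.ext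
      rw [pow_coe RICH h]
      show rich^[_] _ = _
      decide
    have hfix8 : (RICH ^ 8) Y8 = Y8 := by
      apply Subtype.ext
      rw [pow_coe RICH h]
      show rich^[_] _ = _
      decide
    have hne6 : RICH ^ 6 ≠ 1 := by
      intro heq
      have : ((RICH ^ 6) Yb : Fin 3 → ZMod 12) = (Yb : Fin 3 → ZMod 12) := by
        rw [heq]; rfl
      rw [pow_coe RICH h] at this
      exact absurd this (by decide : ¬ rich^[6] ![0,4,7] = ![0,4,7])
    have hne8 : RICH ^ 8 ≠ 1 := by
      intro heq
      have : ((RICH ^ 8) Y6 : Fin 3 → ZMod 12) = (Y6 : Fin 3 → ZMod 12) := by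
        rw [heq]; rfl
      rw [pow_coe RICH h] at this
      exact absurd this (by decide : ¬ rich^[8] ![0,7,4] = ![0,7,4])
    refine ⟨⟨Y6, hfix6⟩, hne6, ⟨Y8, hfix8⟩, hne8, ?_⟩
    intro H hRH hst
    exact hne6 ((hst Y6 Y6).unique ⟨pow_mem hRH 6, hfix6⟩ ⟨one_mem H, rfl⟩)
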